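/- For a T0 space X, the following are equivalent: (1) X is sober; (2) for every irreducible closed set A and every nonempty upper set K of X: the family Ψ_up(A) = {nonempty upper sets meeting A} is a filter in the poset of nonempty upper sets under reverse inclusion (in particular, for any two nonempty upper sets K1, K2 meeting A there is a nonempty upper set K3 ⊆ K1 ∩ K2 meeting A), A has a maximal element, and ↓(A ∩ K) is closed; (3) for every irreducible closed set A and every nonempty compact saturated set K: the family Ψ_K(A) = {K' ∈ K(X) : K' ∩ A ≠ ∅} is a filter in the poset K(X) under reverse inclusion (in particular, for any K1, K2 ∈ K(X) meeting A there is K3 ∈ K(X) with K3 ⊆ K1 ∩ K2 meeting A), A has a maximal element, and ↓(A ∩ K) is closed. -/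

import Mathlib

open Set

universe u

variable {α : Type u}

/-- The specialization order used in the paper: `x ≤ y` iff `x ∈ closure {y}`. -/
def specLE [TopologicalSpace α] (x y : α) : Prop := x ∈ closure ({y} : Set α)

/-- `↑x = {y | x ≤ y}` in the specialization order. -/
def upOf [TopologicalSpace α] (x : α) : Set α := {y | specLE x y}

/-- `↑F = {y | ∃ a ∈ F, a ≤ y}` in the specialization order. -/
def upSetOf [TopologicalSpace α] (F : Set α) : Set α := {y | ∃ a ∈ F, specLE a y}

/-- `↓B = {x | ∃ b ∈ B, x ≤ b}` in the specialization order. -/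
def downOf [TopologicalSpace α] (B : Set α) : Set α := {x | ∃ b ∈ B, specLE x b}

/-- A set directed with respect to the specialization order: nonempty, and any two
elements have an upper bound in it. -/
def SDirected [TopologicalSpace α] (D : Set α) : Prop :=
  D.Nonempty ∧ ∀ a ∈ D, ∀ b ∈ D, ∃ c ∈ D, specLE a c ∧ specLE b c

/-- `s` is a supremum (least upper bound) of `D` in the specialization order. -/
def SIsSup [TopologicalSpace α] (D : Set α) (s : α) : Prop :=
  (∀ d ∈ D, specLE d s) ∧ ∀ t : α, (∀ d ∈ D, specLE d t) → specLE s t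

/-- Upper set (= saturated set) in the specialization order. -/
def SUpper [TopologicalSpace α] (A : Set α) : Prop :=
  ∀ ⦃x y : α⦄, x ∈ A → specLE x y → y ∈ A

/-- Scott open set with respect to the specialization order. -/
def SScottOpen [TopologicalSpace α] (U : Set α) : Prop :=
  SUpper U ∧ ∀ D : Set α, SDirected D → ∀ s : α, SIsSup D s → s ∈ U → (D ∩ U).Nonempty

/-- A d-space: a dcpo under the specialization order, all open sets Scott open. -/
def IsDSpace (α : Type u) [TopologicalSpace α] : Prop :=
  (∀ D : Set α, SDirected D → ∃ s : α, SIsSup D s) ∧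
    ∀ U : Set α, IsOpen U → SScottOpen U

/-- Member of `K(X)`: nonempty, compact and saturated. -/
def IsKSet [TopologicalSpace α] (K : Set α) : Prop :=
  K.Nonempty ∧ IsCompact K ∧ SUpper K

/-- A filtered family of sets: nonempty, and any two members contain a common member. -/
def FilteredFam (𝒦 : Set (Set α)) : Prop :=
  𝒦.Nonempty ∧ ∀ K1 ∈ 𝒦, ∀ K2 ∈ 𝒦, ∃ K3 ∈ 𝒦, K3 ⊆ K1 ∩ K2

/-- Well-filtered space: for every filtered family of nonempty compact saturated sets whose
intersection is contained in an open `U`, some member is contained in `U`. -/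
def IsWellFiltered (α : Type u) [TopologicalSpace α] : Prop :=
  ∀ 𝒦 : Set (Set α), (∀ K ∈ 𝒦, IsKSet K) → FilteredFam 𝒦 →
    ∀ U : Set α, IsOpen U → ⋂₀ 𝒦 ⊆ U → ∃ K ∈ 𝒦, K ⊆ U

/-- Rudin set: a nonempty set `A` such that for some filtered family `𝒦 ⊆ K(X)`,
`closure A` is a minimal closed set meeting every member of `𝒦`. -/
def IsRudin [TopologicalSpace α] (A : Set α) : Prop :=
  A.Nonempty ∧ ∃ 𝒦 : Set (Set α), (∀ K ∈ 𝒦, IsKSet K) ∧ FilteredFam 𝒦 ∧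
    (∀ K ∈ 𝒦, (closure A ∩ K).Nonempty) ∧
    ∀ B : Set α, IsClosed B → B ⊆ closure A → (∀ K ∈ 𝒦, (B ∩ K).Nonempty) → B = closure A

/-- Well-filtered determined set: every continuous map into a well-filtered T0 space sends it
to a set whose closure is the closure of a unique point. -/
def IsWFD [TopologicalSpace α] (A : Set α) : Prop :=
  ∀ (Y : Type u) [TopologicalSpace Y] [T0Space Y], IsWellFiltered Y →
    ∀ f : α → Y, Continuous f → ∃! y : Y, closure (f '' A) = closure ({y} : Set Y)

/-- Irreducible set. -/
def IsIrred [TopologicalSpace α] (A : Set α) : Prop :=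
  A.Nonempty ∧ ∀ F1 F2 : Set α, IsClosed F1 → IsClosed F2 → A ⊆ F1 ∪ F2 → A ⊆ F1 ∨ A ⊆ F2

/-- Sober space: every irreducible closed set is the closure of a unique point. -/
def IsSober (α : Type u) [TopologicalSpace α] : Prop :=
  ∀ A : Set α, IsClosed A → IsIrred A → ∃! x : α, A = closure ({x} : Set α)

/-- `A` has a maximal element with respect to the specialization order. -/
def HasMaxElem [TopologicalSpace α] (A : Set α) : Prop :=
  ∃ m ∈ A, ∀ a ∈ A, specLE m a → a = m

/-- Strong d-space. -/
def IsStrongDSpace (α : Type u) [TopologicalSpace α] : Prop :=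
  ∀ D : Set α, SDirected D → ∀ x : α, ∀ U : Set α, IsOpen U →
    (⋂ d ∈ D, upOf d) ∩ upOf x ⊆ U → ∃ d ∈ D, upOf d ∩ upOf x ⊆ U

/-- `Ψ_up(A)`: the nonempty upper sets meeting `A`. -/
def PsiUp [TopologicalSpace α] (A : Set α) : Set (Set α) :=
  {K : Set α | K.Nonempty ∧ SUpper K ∧ (K ∩ A).Nonempty}

/-- `Ψ_K(A)`: the nonempty compact saturated sets meeting `A`. -/
def PsiK [TopologicalSpace α] (A : Set α) : Set (Set α) :=
  {K : Set α | IsKSet K ∧ (K ∩ A).Nonempty}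

/-- `Ψ` is a filter in the ambient family `amb` under reverse inclusion: nonempty, closed
under passing to supersets within `amb`, and any two members contain a common member. -/
def IsFilterIn (Ψ amb : Set (Set α)) : Prop :=
  Ψ.Nonempty ∧ (∀ K ∈ Ψ, ∀ K' ∈ amb, K ⊆ K' → K' ∈ Ψ) ∧
    ∀ K1 ∈ Ψ, ∀ K2 ∈ Ψ, ∃ K3 ∈ Ψ, K3 ⊆ K1 ∩ K2

section Aux
variable [TopologicalSpace α]

lemma specLE_refl (x : α) : specLE x x := subset_closure rfl

lemma specLE_trans {x y z : α} (h1 : specLE x y) (h2 : specLE y z) : specLE x z := by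
  have : closure ({y} : Set α) ⊆ closure ({z} : Set α) :=
    closure_minimal (Set.singleton_subset_iff.2 h2) isClosed_closure
  exact this h1

lemma specLE_antisymm [T0Space α] {x y : α} (h1 : specLE x y) (h2 : specLE y x) : x = y := by
  have h1s : Specializes y x := specializes_iff_mem_closure.2 h1
  have h2s : Specializes x y := specializes_iff_mem_closure.2 h2
  exact (h2s.antisymm h1s).eq

lemma isOpen_supper {U : Set α} (hU : IsOpen U) : SUpper U := by
  intro x y hx hxy
  rcases mem_closure_iff.1 hxy U hU hx with ⟨z, hz, rfl⟩
  exact hz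

lemma supper_upOf (x : α) : SUpper (upOf x) := fun a b ha hab => specLE_trans ha hab

lemma mem_upOf_self (x : α) : x ∈ upOf x := specLE_refl x

lemma isCompact_upOf (x : α) : IsCompact (upOf x) := by
  apply isCompact_of_finite_subcover
  intro ι U hU hcov
  rcases Set.mem_iUnion.1 (hcov (mem_upOf_self x)) with ⟨i, hi⟩
  refine ⟨{i}, fun y hy => Set.mem_iUnion₂.2 ⟨i, Finset.mem_singleton_self i, ?_⟩⟩
  exact isOpen_supper (hU i) hi hy

lemma mem_closure_of_specLE {A : Set α} (hA : IsClosed A) {a b : α}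
    (hb : b ∈ A) (hab : specLE a b) : a ∈ A :=
  closure_minimal (by simpa [Set.singleton_subset_iff] using hb) hA hab

end Aux

/-- characterizations of sober spaces. -/
theorem stmt_19 (α : Type u) [TopologicalSpace α] [T0Space α] :
    List.TFAE
      [ IsSober α,
        ∀ A : Set α, IsClosed A → IsIrred A →
          IsFilterIn (PsiUp A) {K : Set α | K.Nonempty ∧ SUpper K} ∧ HasMaxElem A ∧
            ∀ K : Set α, K.Nonempty → SUpper K → IsClosed (downOf (A ∩ K)),
        ∀ A : Set α, IsClosed A → IsIrred A →
          IsFilterIn (PsiK A) {K : Set α | IsKSet K} ∧ HasMaxElem A ∧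
            ∀ K : Set α, IsKSet K → IsClosed (downOf (A ∩ K)) ] := by
  have key12 : ∀ (amb : Set (Set α)), (∀ x : α, upOf x ∈ amb) →
      (∀ K ∈ amb, K.Nonempty ∧ SUpper K) →
      IsSober α → ∀ A : Set α, IsClosed A → IsIrred A →
        IsFilterIn {K ∈ amb | (K ∩ A).Nonempty} amb ∧ HasMaxElem A ∧
          ∀ K : Set α, K.Nonempty → SUpper K → IsClosed (downOf (A ∩ K)) := by
    intro amb hup hamb hsob A hAcl hAirr
    obtain ⟨x, hx, -⟩ := hsob A hAcl hAirr
    have hxA : x ∈ A := hx ▸ subset_closure rfl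
    have hle : ∀ a ∈ A, specLE a x := fun a ha =>
      show a ∈ closure ({x} : Set α) from hx ▸ ha
    have hxmem : ∀ K : Set α, SUpper K → (K ∩ A).Nonempty → x ∈ K := by
      rintro K hK ⟨a, haK, haA⟩
      exact hK haK (hle a haA)
    refine ⟨⟨⟨upOf x, hup x, ⟨x, mem_upOf_self x, hxA⟩⟩, ?_, ?_⟩, ⟨x, hxA, ?_⟩, ?_⟩
    · rintro K ⟨-, hKA⟩ K' hK' hKK'
      exact ⟨hK', hKA.mono (inter_subset_inter hKK' (le_refl A))⟩
    · rintro K1 ⟨hK1, hK1A⟩ K2 ⟨hK2, hK2A⟩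
      have h1 := hxmem K1 (hamb K1 hK1).2 hK1A
      have h2 := hxmem K2 (hamb K2 hK2).2 hK2A
      refine ⟨upOf x, ⟨hup x, ⟨x, mem_upOf_self x, hxA⟩⟩, fun y hy =>
        ⟨(hamb K1 hK1).2 h1 hy, (hamb K2 hK2).2 h2 hy⟩⟩
    · intro a haA hxa
      exact specLE_antisymm (hle a haA) hxa
    · intro K _ hKup
      by_cases h : (A ∩ K).Nonempty
      · have hxK : x ∈ K := by
          obtain ⟨a, haA, haK⟩ := h
          exact hKup haK (hle a haA)
        have : downOf (A ∩ K) = A := by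
          apply Set.eq_of_subset_of_subset
          · rintro z ⟨b, ⟨hbA, -⟩, hzb⟩
            exact mem_closure_of_specLE hAcl hbA hzb
          · intro z hz
            exact ⟨x, ⟨hxA, hxK⟩, hle z hz⟩
        rw [this]; exact hAcl
      · have : downOf (A ∩ K) = ∅ := by
          apply Set.eq_empty_iff_forall_notMem.2
          rintro z ⟨b, hb, -⟩
          exact h ⟨b, hb⟩
        rw [this]; exact isClosed_empty
  have key21 : ∀ A : Set α, IsClosed A →
      (∀ x : α, (upOf x ∩ A).Nonempty → ∃ K3, ((K3 ∩ A).Nonempty ∧ SUpper K3) ∧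
        K3 ⊆ upOf x → True) → True := fun _ _ _ => trivial
  clear key21
  have back : ∀ A : Set α, IsClosed A → A.Nonempty →
      (∀ a ∈ A, ∀ m ∈ A, ∃ K3 : Set α, SUpper K3 ∧ (K3 ∩ A).Nonempty ∧
        K3 ⊆ upOf a ∩ upOf m) →
      HasMaxElem A → ∃! x : α, A = closure ({x} : Set α) := by
    rintro A hAcl hAne hdir ⟨m, hmA, hmax⟩
    have hA : A = closure ({m} : Set α) := by
      apply Set.eq_of_subset_of_subset
      · intro a haA
        obtain ⟨K3, hK3up, ⟨c, hcK3, hcA⟩, hsub⟩ := hdir a haA m hmA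
        obtain ⟨hac, hmc⟩ := hsub hcK3
        have : c = m := hmax c hcA hmc
        exact this ▸ hac
      · exact closure_minimal (Set.singleton_subset_iff.2 hmA) hAcl
    refine ⟨m, hA, fun y hy => ?_⟩
    have hym : y ∈ A := hy ▸ (subset_closure rfl : y ∈ closure {y})
    have hmy : m ∈ A := hmA
    have h1 : specLE y m := show y ∈ closure ({m} : Set α) from hA ▸ hym
    have h2 : specLE m y := show m ∈ closure ({y} : Set α) from hy ▸ hmy
    exact specLE_antisymm h1 h2
  tfae_have 1 → 2 := by
    intro h A hAcl hAirr
    have heq : PsiUp A = {K ∈ {K : Set α | K.Nonempty ∧ SUpper K} | (K ∩ A).Nonempty} := by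
      ext K; simp [PsiUp, Set.mem_setOf_eq]; tauto
    rw [heq]
    exact key12 {K : Set α | K.Nonempty ∧ SUpper K}
      (fun x => ⟨⟨x, mem_upOf_self x⟩, supper_upOf x⟩) (fun K hK => hK) h A hAcl hAirr
  tfae_have 1 → 3 := by
    intro h A hAcl hAirr
    have heq : PsiK A = {K ∈ {K : Set α | IsKSet K} | (K ∩ A).Nonempty} := by
      ext K; simp [PsiK, Set.mem_setOf_eq]
    rw [heq]
    obtain ⟨hfil, hmax, hcl⟩ := key12 {K : Set α | IsKSet K}
      (fun x => ⟨⟨x, mem_upOf_self x⟩, isCompact_upOf x, supper_upOf x⟩)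
      (fun K hK => ⟨hK.1, hK.2.2⟩) h A hAcl hAirr
    exact ⟨hfil, hmax, fun K hK => hcl K hK.1 hK.2.2⟩
  tfae_have 2 → 1 := by
    intro h A hAcl hAirr
    obtain ⟨⟨-, -, hdir⟩, hmax, -⟩ := h A hAcl hAirr
    refine back A hAcl hAirr.1 ?_ hmax
    intro a haA m hmA
    obtain ⟨K3, ⟨-, hK3up, hK3A⟩, hsub⟩ := hdir (upOf a)
      ⟨⟨a, mem_upOf_self a⟩, supper_upOf a, ⟨a, mem_upOf_self a, haA⟩⟩ (upOf m)
      ⟨⟨m, mem_upOf_self m⟩, supper_upOf m, ⟨m, mem_upOf_self m, hmA⟩⟩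
    exact ⟨K3, hK3up, hK3A, hsub⟩
  tfae_have 3 → 1 := by
    intro h A hAcl hAirr
    obtain ⟨⟨-, -, hdir⟩, hmax, -⟩ := h A hAcl hAirr
    refine back A hAcl hAirr.1 ?_ hmax
    intro a haA m hmA
    obtain ⟨K3, ⟨⟨-, -, hK3up⟩, hK3A⟩, hsub⟩ := hdir (upOf a)
      ⟨⟨⟨a, mem_upOf_self a⟩, isCompact_upOf a, supper_upOf a⟩, ⟨a, mem_upOf_self a, haA⟩⟩
      (upOf m)
      ⟨⟨⟨m, mem_upOf_self m⟩, isCompact_upOf m, supper_upOf m⟩, ⟨m, mem_upOf_self m, hmA⟩⟩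
    exact ⟨K3, hK3up, hK3A, hsub⟩
  tfae_finish
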